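/- Truth Lemma: let X ⊆ {D,T,4} and L = LIK X. In the canonical model (W_L, ≤_L, R_L, V_L), for every formula A and every prime theory Γ ∈ W_L: A ∈ Γ if and only if (W_L, ≤_L, R_L, V_L), Γ ⊩ A. -/

import Mathlib

/-- Formulas of intuitionistic modal logic. -/
inductive Formula : Type where
  | atom : ℕ → Formula
  | top  : Formula
  | bot  : Formula
  | and  : Formula → Formula → Formula
  | or   : Formula → Formula → Formula
  | imp  : Formula → Formula → Formula
  | box  : Formula → Formula
  | dia  : Formula → Formula
deriving DecidableEq

/-- A model: a frame `(W, ≤, R)` together with a monotone valuation. -/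
structure Model (W : Type) where
  le : W → W → Prop
  rel : W → W → Prop
  val : ℕ → W → Prop
  le_refl : ∀ x, le x x
  le_trans : ∀ x y z, le x y → le y z → le x z
  val_mono : ∀ p x y, le x y → val p x → val p y

/-- Forward confluence: `x ≤ x'` and `R x y` yield `y'` with `R x' y'` and `y ≤ y'`. -/
def ForwardConfluent {W : Type} (M : Model W) : Prop :=
  ∀ x x' y, M.le x x' → M.rel x y → ∃ y', M.rel x' y' ∧ M.le y y'

/-- Downward confluence: `x ≤ x'` and `R x' y'` yield `y` with `R x y` and `y ≤ y'`. -/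
def DownwardConfluent {W : Type} (M : Model W) : Prop :=
  ∀ x x' y', M.le x x' → M.rel x' y' → ∃ y, M.rel x y ∧ M.le y y'

/-- The local forcing relation. -/
def Force {W : Type} (M : Model W) : W → Formula → Prop
  | x, .atom p => M.val p x
  | _, .top => True
  | _, .bot => False
  | x, .and A B => Force M x A ∧ Force M x B
  | x, .or A B => Force M x A ∨ Force M x B
  | x, .imp A B => ∀ y, M.le x y → Force M y A → Force M y B
  | x, .box A => ∀ y, M.rel x y → Force M y A
  | x, .dia A => ∃ y, M.rel x y ∧ Force M y A

/-- The three optional extension axioms D, T, 4. -/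
inductive ModAx : Type where
  | D : ModAx
  | T : ModAx
  | Four : ModAx
deriving DecidableEq

/-- The Hilbert system LIK X: a complete Hilbert base for intuitionistic
propositional logic (as axiom schemata, hence all substitution instances of
IPL theorems are derivable), the modal axioms K□, K◇, N, DP, RV, the
extension axioms D, T, 4 according to membership in `X`, with rules
modus ponens and necessitation. -/
inductive LIK (X : Set ModAx) : Formula → Prop where
  | a1 (A B : Formula) : LIK X (A.imp (B.imp A))
  | a2 (A B C : Formula) : LIK X ((A.imp (B.imp C)).imp ((A.imp B).imp (A.imp C)))
  | a3 (A B : Formula) : LIK X ((A.and B).imp A)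
  | a4 (A B : Formula) : LIK X ((A.and B).imp B)
  | a5 (A B : Formula) : LIK X (A.imp (B.imp (A.and B)))
  | a6 (A B : Formula) : LIK X (A.imp (A.or B))
  | a7 (A B : Formula) : LIK X (B.imp (A.or B))
  | a8 (A B C : Formula) : LIK X ((A.imp C).imp ((B.imp C).imp ((A.or B).imp C)))
  | exfalso (A : Formula) : LIK X (Formula.bot.imp A)
  | truth : LIK X Formula.top
  | kbox (A B : Formula) :
      LIK X ((Formula.box (A.imp B)).imp ((Formula.box A).imp (Formula.box B)))
  | kdia (A B : Formula) :
      LIK X ((Formula.box (A.imp B)).imp ((Formula.dia A).imp (Formula.dia B)))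
  | nax : LIK X ((Formula.dia Formula.bot).imp Formula.bot)
  | dp (A B : Formula) :
      LIK X ((Formula.dia (A.or B)).imp ((Formula.dia A).or (Formula.dia B)))
  | rv (A B : Formula) :
      LIK X ((Formula.box (A.or B)).imp ((Formula.dia A).or (Formula.box B)))
  | dax : ModAx.D ∈ X → LIK X (Formula.dia Formula.top)
  | tax (A : Formula) : ModAx.T ∈ X →
      LIK X (((Formula.box A).imp A).and (A.imp (Formula.dia A)))
  | fourax (A : Formula) : ModAx.Four ∈ X →
      LIK X (((Formula.box A).imp (Formula.box (Formula.box A))).and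
        ((Formula.dia (Formula.dia A)).imp (Formula.dia A)))
  | mp (A B : Formula) : LIK X (A.imp B) → LIK X A → LIK X B
  | nec (A : Formula) : LIK X A → LIK X (Formula.box A)

/-- A theory for L = LIK X: contains all L-derivable formulas and is closed
under modus ponens. -/
def IsTheory (X : Set ModAx) (Γ : Set Formula) : Prop :=
  (∀ A, LIK X A → A ∈ Γ) ∧ ∀ A B, Formula.imp A B ∈ Γ → A ∈ Γ → B ∈ Γ

/-- A prime theory: a proper theory (⊥ ∉ Γ) deciding disjunctions. -/
def IsPrime (X : Set ModAx) (Γ : Set Formula) : Prop :=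
  IsTheory X Γ ∧ Formula.bot ∉ Γ ∧ ∀ A B, Formula.or A B ∈ Γ → A ∈ Γ ∨ B ∈ Γ

/-- The canonical accessibility relation:
`R_L Γ Δ` iff `□Γ ⊆ Δ` and `◇Δ ⊆ Γ`. -/
def CanR (Γ Δ : Set Formula) : Prop :=
  (∀ A, Formula.box A ∈ Γ → A ∈ Δ) ∧ (∀ A, A ∈ Δ → Formula.dia A ∈ Γ)

/-- The canonical model of L = LIK X: worlds are the prime theories, ordered
by inclusion, with the canonical accessibility relation and canonical
valuation. -/
def CanModel (X : Set ModAx) : Model {Γ : Set Formula // IsPrime X Γ} where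
  le Γ Δ := Γ.1 ⊆ Δ.1
  rel Γ Δ := CanR Γ.1 Δ.1
  val p Γ := Formula.atom p ∈ Γ.1
  le_refl := fun _ => subset_rfl
  le_trans := fun _ _ _ h1 h2 => h1.trans h2
  val_mono := fun _ _ _ h hp => h hp

namespace TruthAux

variable {X : Set ModAx}

/-- Derivability from a set of hypotheses. -/
inductive Der (X : Set ModAx) (S : Set Formula) : Formula → Prop
  | mem {A} (h : A ∈ S) : Der X S A
  | ax {A} (h : LIK X A) : Der X S A
  | mp {A B} (h1 : Der X S (A.imp B)) (h2 : Der X S A) : Der X S B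

lemma lmp {A B : Formula} (h1 : LIK X (A.imp B)) (h2 : LIK X A) : LIK X B :=
  LIK.mp A B h1 h2

lemma lid (A : Formula) : LIK X (A.imp A) :=
  lmp (lmp (LIK.a2 A (A.imp A) A) (LIK.a1 A (A.imp A))) (LIK.a1 A A)

lemma deduction {S : Set Formula} {A B : Formula}
    (h : Der X (insert A S) B) : Der X S (A.imp B) := by
  induction h with
  | mem h =>
    rcases h with rfl | h
    · exact .ax (lid _)
    · exact .mp (.ax (LIK.a1 _ _)) (.mem h)
  | ax h => exact .mp (.ax (LIK.a1 _ _)) (.ax h)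
  | mp _ _ ih1 ih2 => exact .mp (.mp (.ax (LIK.a2 _ _ _)) ih1) ih2

lemma thm_of_der {A : Formula} (h : Der X ∅ A) : LIK X A := by
  induction h with
  | mem h => exact absurd h (Set.notMem_empty _)
  | ax h => exact h
  | mp _ _ ih1 ih2 => exact lmp ih1 ih2

lemma orElim {S : Set Formula} {P Q R : Formula} (h : Der X S (P.or Q))
    (hp : Der X S (P.imp R)) (hq : Der X S (Q.imp R)) : Der X S R :=
  .mp (.mp (.mp (.ax (LIK.a8 P Q R)) hp) hq) h

lemma theory_der {Γ : Set Formula} {A : Formula} (hΓ : IsTheory X Γ)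
    (h : Der X Γ A) : A ∈ Γ := by
  induction h with
  | mem h => exact h
  | ax h => exact hΓ.1 _ h
  | mp _ _ ih1 ih2 => exact hΓ.2 _ _ ih1 ih2

lemma ltrans {A B C : Formula} (h1 : LIK X (A.imp B)) (h2 : LIK X (B.imp C)) :
    LIK X (A.imp C) :=
  thm_of_der (deduction (.mp (.ax h2) (.mp (.ax h1) (.mem (Set.mem_insert _ _)))))

/-- w-modus-ponens under a disjunction: ⊢ (A∨D) ⊃ ((A∨(D⊃E)) ⊃ (A∨E)). -/
lemma wmp (A D E : Formula) :
    LIK X ((A.or D).imp ((A.or (D.imp E)).imp (A.or E))) := by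
  apply thm_of_der
  apply deduction
  apply deduction
  refine orElim (Der.mem (Set.mem_insert_of_mem _ (Set.mem_insert _ _)))
    (.ax (LIK.a6 A E)) ?_
  apply deduction
  refine orElim (Der.mem (Set.mem_insert_of_mem _ (Set.mem_insert _ _)))
    (.ax (LIK.a6 A E)) ?_
  apply deduction
  exact .mp (.ax (LIK.a7 A E)) (.mp (.mem (Set.mem_insert _ _))
    (.mem (Set.mem_insert_of_mem _ (Set.mem_insert _ _))))

/-- ⊢ (A∨(A∨D)) ⊃ (A∨D). -/
lemma wcontr (A D : Formula) : LIK X ((A.or (A.or D)).imp (A.or D)) := by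
  apply thm_of_der
  apply deduction
  exact orElim (Der.mem (Set.mem_insert _ _)) (.ax (LIK.a6 A D)) (.ax (lid _))

/-- ⊢ (A∨(A∨D)) ⊃ (D∨A). -/
lemma wswap (A D : Formula) : LIK X ((A.or (A.or D)).imp (D.or A)) := by
  apply thm_of_der
  apply deduction
  refine orElim (Der.mem (Set.mem_insert _ _)) (.ax (LIK.a7 D A)) ?_
  apply deduction
  exact orElim (Der.mem (Set.mem_insert _ _)) (.ax (LIK.a7 D A)) (.ax (LIK.a6 D A))

end TruthAux
namespace TruthAux

variable {X : Set ModAx}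

/-- The general prime-extension lemma via Zorn. -/
lemma prime_ext (w : Formula → Formula) (good : Formula → Prop) (S0 : Set Formula)
    (hS0 : IsTheory X S0)
    (h1 : ∀ D : Formula, LIK X (D.imp (w D)))
    (h2 : ∀ D : Formula, LIK X ((w (w D)).imp (w D)))
    (h3 : ∀ D E : Formula, LIK X ((w D).imp ((w (D.imp E)).imp (w E))))
    (h5 : ∀ D E : Formula, good (D.or E) → good D ∨ good E)
    (h6 : ¬ good Formula.bot)
    (h7 : ∀ D : Formula, w D ∈ S0 → good D) :
    ∃ Δ, IsPrime X Δ ∧ S0 ⊆ Δ ∧ ∀ D : Formula, w D ∈ Δ → good D := by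
  classical
  set S : Set (Set Formula) :=
    {Δ | IsTheory X Δ ∧ S0 ⊆ Δ ∧ ∀ D : Formula, w D ∈ Δ → good D} with hSdef
  have hchain : ∀ c ⊆ S, IsChain (fun x1 x2 => x1 ⊆ x2) c → c.Nonempty →
      ∃ ub ∈ S, ∀ s ∈ c, s ⊆ ub := by
    intro c hcS hc ⟨t, ht⟩
    refine ⟨⋃₀ c, ⟨⟨?_, ?_⟩, ?_, ?_⟩, fun s hs => Set.subset_sUnion_of_mem hs⟩
    · intro A hA; exact ⟨t, ht, (hcS ht).1.1 _ hA⟩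
    · rintro A B ⟨t1, ht1, hAB⟩ ⟨t2, ht2, hA⟩
      rcases hc.total ht1 ht2 with h | h
      · exact ⟨t2, ht2, (hcS ht2).1.2 _ _ (h hAB) hA⟩
      · exact ⟨t1, ht1, (hcS ht1).1.2 _ _ hAB (h hA)⟩
    · exact (hcS ht).2.1.trans (Set.subset_sUnion_of_mem ht)
    · rintro D ⟨t1, ht1, hD⟩; exact (hcS ht1).2.2 _ hD
  obtain ⟨M, hM0, hMmax⟩ := zorn_subset_nonempty S hchain S0 ⟨hS0, subset_rfl, h7⟩
  obtain ⟨hMthy, hMS0, hMgood⟩ := hMmax.1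
  have key : ∀ B, B ∉ M → ∃ D, (Formula.imp B (w D)) ∈ M ∧ ¬ good D := by
    intro B hB
    by_contra hcon
    push_neg at hcon
    have hsubM : M ⊆ {D | Der X (insert B M) (w D)} := fun D hD =>
      .mp (.ax (h1 D)) (.mem (Set.mem_insert_of_mem _ hD))
    have hgood' : ∀ D : Formula, w D ∈ {D | Der X (insert B M) (w D)} → good D := by
      intro D hD
      exact hcon D (theory_der hMthy (deduction (Der.mp (.ax (h2 D)) hD)))
    have hthy : IsTheory X {D | Der X (insert B M) (w D)} := by
      constructor
      · intro A hA; exact .ax (lmp (h1 A) hA)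
      · intro A B' hAB hA
        exact .mp (.mp (.ax (h3 A B')) hA) hAB
    have hmem : {D | Der X (insert B M) (w D)} ∈ S :=
      ⟨hthy, hMS0.trans hsubM, hgood'⟩
    have : {D | Der X (insert B M) (w D)} ⊆ M := hMmax.2 hmem hsubM
    exact hB (this (.mp (.ax (h1 B)) (.mem (Set.mem_insert _ _))))
  have hbot : Formula.bot ∉ M := by
    intro hb
    exact h6 (hMgood _ (hMthy.2 _ _ (hMthy.1 _ (h1 Formula.bot)) hb))
  have hprime : ∀ P Q, Formula.or P Q ∈ M → P ∈ M ∨ Q ∈ M := by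
    intro P Q hPQ
    by_contra hcc
    push_neg at hcc
    obtain ⟨DP, hDP, hgP⟩ := key P hcc.1
    obtain ⟨DQ, hDQ, hgQ⟩ := key Q hcc.2
    have hw : w (DP.or DQ) ∈ M := by
      apply theory_der hMthy
      refine orElim (.mem hPQ) (deduction ?_) (deduction ?_)
      · exact .mp (.mp (.ax (h3 DP (DP.or DQ)))
          (.mp (.mem (Set.mem_insert_of_mem _ hDP)) (.mem (Set.mem_insert _ _))))
          (.ax (lmp (h1 _) (LIK.a6 DP DQ)))
      · exact .mp (.mp (.ax (h3 DQ (DP.or DQ)))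
          (.mp (.mem (Set.mem_insert_of_mem _ hDQ)) (.mem (Set.mem_insert _ _))))
          (.ax (lmp (h1 _) (LIK.a7 DP DQ)))
    rcases h5 _ _ (hMgood _ hw) with h | h
    · exact hgP h
    · exact hgQ h
  exact ⟨M, ⟨⟨hMthy.1, hMthy.2⟩, hbot, hprime⟩, hM0, hMgood⟩

end TruthAux
namespace TruthAux

variable {X : Set ModAx}

lemma box_lift {Γ : Set Formula} (hΓ : IsTheory X Γ) {E : Formula}
    (h : Der X {B | Formula.box B ∈ Γ} E) : Formula.box E ∈ Γ := by
  induction h with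
  | mem h => exact h
  | ax h => exact hΓ.1 _ (LIK.nec _ h)
  | mp _ _ ih1 ih2 => exact hΓ.2 _ _ (hΓ.2 _ _ (hΓ.1 _ (LIK.kbox _ _)) ih1) ih2

/-- Existence lemma for implication. -/
lemma imp_ext {Γ : Set Formula} (hΓ : IsPrime X Γ) {A B : Formula}
    (h : Formula.imp A B ∉ Γ) :
    ∃ Δ, IsPrime X Δ ∧ Γ ⊆ Δ ∧ A ∈ Δ ∧ B ∉ Δ := by
  obtain ⟨Δ, hΔp, hsub, hgood⟩ := prime_ext (X := X) id (fun D => ¬ LIK X (D.imp B))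
    {C | Der X (insert A Γ) C}
    ⟨fun C hC => .ax hC, fun C D h1 h2 => .mp h1 h2⟩
    (fun D => lid D) (fun D => lid _)
    (fun D E => thm_of_der (deduction (deduction
      (Der.mp (.mem (Set.mem_insert _ _))
        (.mem (Set.mem_insert_of_mem _ (Set.mem_insert _ _)))))))
    (fun D E hDE => by
      by_contra hc
      push_neg at hc
      exact hDE (lmp (lmp (LIK.a8 D E B) hc.1) hc.2))
    (not_not_intro (LIK.exfalso B))
    (fun D hD hDB => h (theory_der hΓ.1 (deduction (Der.mp (.ax hDB) hD))))
  refine ⟨Δ, hΔp, fun C hC => hsub (.mem (Set.mem_insert_of_mem _ hC)),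
    hsub (.mem (Set.mem_insert _ _)), fun hB => hgood B hB (lid B)⟩

/-- Existence lemma for diamond. -/
lemma dia_ext {Γ : Set Formula} (hΓ : IsPrime X Γ) {A : Formula}
    (h : Formula.dia A ∈ Γ) :
    ∃ Δ, IsPrime X Δ ∧ CanR Γ Δ ∧ A ∈ Δ := by
  obtain ⟨Δ, hΔp, hsub, hgood⟩ := prime_ext (X := X) id (fun D => Formula.dia D ∈ Γ)
    {C | Der X (insert A {B | Formula.box B ∈ Γ}) C}
    ⟨fun C hC => .ax hC, fun C D h1 h2 => .mp h1 h2⟩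
    (fun D => lid D) (fun D => lid _)
    (fun D E => thm_of_der (deduction (deduction
      (Der.mp (.mem (Set.mem_insert _ _))
        (.mem (Set.mem_insert_of_mem _ (Set.mem_insert _ _)))))))
    (fun D E hDE => (hΓ.2.2 _ _ (hΓ.1.2 _ _ (hΓ.1.1 _ (LIK.dp D E)) hDE)))
    (fun hb => hΓ.2.1 (hΓ.1.2 _ _ (hΓ.1.1 _ LIK.nax) hb))
    (fun D hD => hΓ.1.2 _ _ (hΓ.1.2 _ _ (hΓ.1.1 _ (LIK.kdia A D))
      (box_lift hΓ.1 (deduction hD))) h)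
  refine ⟨Δ, hΔp, ⟨fun C hC => hsub (.mem (Set.mem_insert_of_mem _ hC)),
    fun C hC => hgood C hC⟩, hsub (.mem (Set.mem_insert _ _))⟩

/-- Existence lemma for box. -/
lemma box_ext {Γ : Set Formula} (hΓ : IsPrime X Γ) {A : Formula}
    (h : Formula.box A ∉ Γ) :
    ∃ Δ, IsPrime X Δ ∧ CanR Γ Δ ∧ A ∉ Δ := by
  have hS0thy : IsTheory X {B | Formula.box (A.or B) ∈ Γ} := by
    constructor
    · intro B hB
      exact hΓ.1.1 _ (LIK.nec _ (lmp (LIK.a7 A B) hB))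
    · intro B C h1 h2
      have k1 : Formula.box ((A.or B).imp ((A.or (B.imp C)).imp (A.or C))) ∈ Γ :=
        hΓ.1.1 _ (LIK.nec _ (wmp A B C))
      have k2 : Formula.box ((A.or (B.imp C)).imp (A.or C)) ∈ Γ :=
        hΓ.1.2 _ _ (hΓ.1.2 _ _ (hΓ.1.1 _ (LIK.kbox _ _)) k1) h2
      exact hΓ.1.2 _ _ (hΓ.1.2 _ _ (hΓ.1.1 _ (LIK.kbox _ _)) k2) h1
  obtain ⟨Δ, hΔp, hsub, hgood⟩ := prime_ext (X := X) (fun D => A.or D)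
    (fun D => Formula.dia D ∈ Γ) {B | Formula.box (A.or B) ∈ Γ}
    hS0thy
    (fun D => LIK.a7 A D)
    (fun D => wcontr A D)
    (fun D E => wmp A D E)
    (fun D E hDE => (hΓ.2.2 _ _ (hΓ.1.2 _ _ (hΓ.1.1 _ (LIK.dp D E)) hDE)))
    (fun hb => hΓ.2.1 (hΓ.1.2 _ _ (hΓ.1.1 _ LIK.nax) hb))
    (fun D hD => by
      have k1 : Formula.box (D.or A) ∈ Γ :=
        hΓ.1.2 _ _ (hΓ.1.2 _ _ (hΓ.1.1 _ (LIK.kbox _ _))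
          (hΓ.1.1 _ (LIK.nec _ (wswap A D)))) hD
      have k2 := hΓ.1.2 _ _ (hΓ.1.1 _ (LIK.rv D A)) k1
      rcases hΓ.2.2 _ _ k2 with h' | h'
      · exact h'
      · exact absurd h' h)
  have hAnot : A ∉ Δ := by
    intro hA
    have : A.or Formula.bot ∈ Δ := hΔp.1.2 _ _ (hΔp.1.1 _ (LIK.a6 A Formula.bot)) hA
    exact hΓ.2.1 (hΓ.1.2 _ _ (hΓ.1.1 _ LIK.nax) (hgood Formula.bot this))
  refine ⟨Δ, hΔp, ⟨fun C hC => hsub ?_, fun C hC =>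
    hgood C (hΔp.1.2 _ _ (hΔp.1.1 _ (LIK.a7 A C)) hC)⟩, hAnot⟩
  show Formula.box (A.or C) ∈ Γ
  exact hΓ.1.2 _ _ (hΓ.1.2 _ _ (hΓ.1.1 _ (LIK.kbox C (A.or C)))
    (hΓ.1.1 _ (LIK.nec _ (LIK.a7 A C)))) hC

end TruthAux
open TruthAux in
/-- Truth Lemma: membership in a prime theory coincides with forcing at that
theory in the canonical model. -/
theorem truth_lemma (X : Set ModAx) (A : Formula)
    (Γ : {Γ : Set Formula // IsPrime X Γ}) :
    A ∈ Γ.1 ↔ Force (CanModel X) Γ A := by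
  induction A generalizing Γ with
  | atom p => exact Iff.rfl
  | top => exact ⟨fun _ => trivial, fun _ => Γ.2.1.1 _ LIK.truth⟩
  | bot => exact ⟨fun h => Γ.2.2.1 h, fun h => h.elim⟩
  | and A B ihA ihB =>
    constructor
    · intro h
      exact ⟨(ihA Γ).mp (Γ.2.1.2 _ _ (Γ.2.1.1 _ (LIK.a3 A B)) h),
             (ihB Γ).mp (Γ.2.1.2 _ _ (Γ.2.1.1 _ (LIK.a4 A B)) h)⟩
    · rintro ⟨hA, hB⟩
      exact Γ.2.1.2 _ _ (Γ.2.1.2 _ _ (Γ.2.1.1 _ (LIK.a5 A B)) ((ihA Γ).mpr hA))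
        ((ihB Γ).mpr hB)
  | or A B ihA ihB =>
    constructor
    · intro h
      rcases Γ.2.2.2 _ _ h with h | h
      · exact Or.inl ((ihA Γ).mp h)
      · exact Or.inr ((ihB Γ).mp h)
    · rintro (h | h)
      · exact Γ.2.1.2 _ _ (Γ.2.1.1 _ (LIK.a6 A B)) ((ihA Γ).mpr h)
      · exact Γ.2.1.2 _ _ (Γ.2.1.1 _ (LIK.a7 A B)) ((ihB Γ).mpr h)
  | imp A B ihA ihB =>
    constructor
    · intro h y hle hA
      exact (ihB y).mp (y.2.1.2 _ _ (hle h) ((ihA y).mpr hA))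
    · intro hF
      by_contra hnin
      obtain ⟨Δ, hΔp, hsub, hA, hB⟩ := imp_ext Γ.2 hnin
      exact hB ((ihB ⟨Δ, hΔp⟩).mpr (hF ⟨Δ, hΔp⟩ hsub ((ihA ⟨Δ, hΔp⟩).mp hA)))
  | box A ihA =>
    constructor
    · intro h y hR
      exact (ihA y).mp (hR.1 _ h)
    · intro hF
      by_contra hnin
      obtain ⟨Δ, hΔp, hR, hA⟩ := box_ext Γ.2 hnin
      exact hA ((ihA ⟨Δ, hΔp⟩).mpr (hF ⟨Δ, hΔp⟩ hR))
  | dia A ihA =>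
    constructor
    · intro h
      obtain ⟨Δ, hΔp, hR, hA⟩ := dia_ext Γ.2 h
      exact ⟨⟨Δ, hΔp⟩, hR, (ihA ⟨Δ, hΔp⟩).mp hA⟩
    · rintro ⟨y, hR, hA⟩
      exact hR.2 _ ((ihA y).mpr hA)
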